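/- Let Ā_λ = A_{λ,p} ∘ ⋯ ∘ A_{λ,1} be the product of the p matrices A_{λ,j} defined above, and let ε̄ = Π_{k=1}^{2p} ε_k. Then det(Ā_λ - I) = 2 - trace(Ā_λ) = -ε̄ λ^{2p} + (lower order terms in λ); in particular, for all sufficiently large λ, det(Ā_λ - I) ≠ 0, so the equation (Ā_λ - I)x = v has a unique solution for any v ∈ R². -/

import Mathlib

open Filter

/-- The matrix `A_{λ,k} = [[1 + ε_{2k+2}ε_{2k-1}λ², -ε_{2k+2}λ], [-ε_{2k-1}λ, 1]]`. -/
noncomputable def eggMat (ε : ℕ → ℝ) (lam : ℝ) (k : ℕ) : Matrix (Fin 2) (Fin 2) ℝ :=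
  !![1 + ε (2 * k + 2) * ε (2 * k - 1) * lam ^ 2, -(ε (2 * k + 2) * lam);
     -(ε (2 * k - 1) * lam), 1]

/-- The ordered product `Ā_λ = A_{λ,p} ⋯ A_{λ,1}`. -/
noncomputable def eggProdFull (ε : ℕ → ℝ) (p : ℕ) (lam : ℝ) : Matrix (Fin 2) (Fin 2) ℝ :=
  (((List.range p).map fun t => eggMat ε lam (p - t))).prod


open Polynomial

/-- Polynomial version of `eggMat`. -/
noncomputable def eggPM (ε : ℕ → ℝ) (k : ℕ) : Matrix (Fin 2) (Fin 2) ℝ[X] :=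
  !![C 1 + C (ε (2 * k + 2) * ε (2 * k - 1)) * X ^ 2, -(C (ε (2 * k + 2)) * X);
     -(C (ε (2 * k - 1)) * X), C 1]

/-- Polynomial version of the partial product. -/
noncomputable def eggQM (ε : ℕ → ℝ) (p m : ℕ) : Matrix (Fin 2) (Fin 2) ℝ[X] :=
  (((List.range m).map fun t => eggPM ε (p - t))).prod

lemma eggQM_succ (ε : ℕ → ℝ) (p m : ℕ) :
    eggQM ε p (m + 1) = eggQM ε p m * eggPM ε (p - m) := by
  simp [eggQM, List.range_succ]

lemma eggPM_map (ε : ℕ → ℝ) (lam : ℝ) (k : ℕ) :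
    (eggPM ε k).map (Polynomial.eval lam) = eggMat ε lam k := by
  ext i j
  fin_cases i <;> fin_cases j <;> simp [eggPM, eggMat]

lemma eggQM_map (ε : ℕ → ℝ) (p : ℕ) (lam : ℝ) :
    (eggQM ε p p).map (Polynomial.eval lam) = eggProdFull ε p lam := by
  have h := map_list_prod ((Polynomial.evalRingHom lam).mapMatrix)
    (((List.range p).map fun t => eggPM ε (p - t)))
  simp only [RingHom.mapMatrix_apply, coe_evalRingHom] at h
  rw [eggQM, h, eggProdFull, List.map_map]
  congr 1
  apply List.map_congr_left
  intro t _
  simp only [Function.comp, RingHom.mapMatrix_apply, coe_evalRingHom]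
  exact eggPM_map ε lam (p - t)


lemma egg_coeff_mul_CX2 (P : ℝ[X]) (c : ℝ) (n : ℕ) (hn : 2 ≤ n) :
    (P * (C c * X ^ 2)).coeff n = c * P.coeff (n - 2) := by
  rw [← mul_assoc, coeff_mul_X_pow', if_pos hn, coeff_mul_C]
  ring

lemma egg_coeff_mul_CX (P : ℝ[X]) (c : ℝ) (n : ℕ) (hn : 1 ≤ n) :
    (P * (C c * X)).coeff n = c * P.coeff (n - 1) := by
  rw [← mul_assoc, ← pow_one X, coeff_mul_X_pow', if_pos hn, coeff_mul_C]
  ring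

lemma eggQM_invariant (ε : ℕ → ℝ) (p : ℕ) (m : ℕ) :
    (∀ n, 2 * m < n → ((eggQM ε p m) 0 0).coeff n = 0) ∧
    ((eggQM ε p m) 0 0).coeff (2 * m) =
      ∏ t ∈ Finset.range m, (ε (2 * (p - t) + 2) * ε (2 * (p - t) - 1)) ∧
    (∀ n, 2 * m ≤ n → ((eggQM ε p m) 0 1).coeff n = 0) ∧
    (∀ n, 2 * m ≤ n → ((eggQM ε p m) 1 0).coeff n = 0) ∧
    (∀ n, 1 ≤ n → 2 * m - 1 ≤ n → ((eggQM ε p m) 1 1).coeff n = 0) := by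
  induction m with
  | zero =>
      refine ⟨?_, ?_, ?_, ?_, ?_⟩ <;>
        simp only [eggQM, List.range_zero, List.map_nil, List.prod_nil, Matrix.one_apply,
          Finset.range_zero, Finset.prod_empty] <;>
        simp [Polynomial.coeff_one] <;> omega
  | succ m ih =>
      obtain ⟨H00a, H00b, H01, H10, H11⟩ := ih
      set Q := eggQM ε p m with hQ
      set a := ε (2 * (p - m) + 2) with ha
      set b := ε (2 * (p - m) - 1) with hb
      have e00 : (eggQM ε p (m + 1)) 0 0
          = Q 0 0 + Q 0 0 * (C (a * b) * X ^ 2) + -(Q 0 1 * (C b * X)) := by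
        rw [eggQM_succ]
        simp [Matrix.mul_apply, Fin.sum_univ_two, eggPM, ← ha, ← hb]
        ring
      have e01 : (eggQM ε p (m + 1)) 0 1
          = -(Q 0 0 * (C a * X)) + Q 0 1 := by
        rw [eggQM_succ]
        simp [Matrix.mul_apply, Fin.sum_univ_two, eggPM, ← ha, ← hb]
        rfl
      have e10 : (eggQM ε p (m + 1)) 1 0
          = Q 1 0 + Q 1 0 * (C (a * b) * X ^ 2) + -(Q 1 1 * (C b * X)) := by
        rw [eggQM_succ]
        simp [Matrix.mul_apply, Fin.sum_univ_two, eggPM, ← ha, ← hb]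
        ring
      have e11 : (eggQM ε p (m + 1)) 1 1
          = -(Q 1 0 * (C a * X)) + Q 1 1 := by
        rw [eggQM_succ]
        simp [Matrix.mul_apply, Fin.sum_univ_two, eggPM, ← ha, ← hb]
        rfl
      refine ⟨?_, ?_, ?_, ?_, ?_⟩
      · intro n hn
        rw [e00]
        simp only [coeff_add, coeff_neg]
        rw [egg_coeff_mul_CX2 _ _ _ (by omega), egg_coeff_mul_CX _ _ _ (by omega),
          H00a n (by omega), H00a (n - 2) (by omega), H01 (n - 1) (by omega)]
        ring
      · rw [e00]
        simp only [coeff_add, coeff_neg]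
        rw [egg_coeff_mul_CX2 _ _ _ (by omega), egg_coeff_mul_CX _ _ _ (by omega),
          H00a (2 * (m + 1)) (by omega), H01 (2 * (m + 1) - 1) (by omega)]
        have h2 : 2 * (m + 1) - 2 = 2 * m := by omega
        rw [h2, H00b, Finset.prod_range_succ]
        ring
      · intro n hn
        rw [e01]
        simp only [coeff_add, coeff_neg]
        rw [egg_coeff_mul_CX _ _ _ (by omega), H00a (n - 1) (by omega), H01 n (by omega)]
        ring
      · intro n hn
        rw [e10]
        simp only [coeff_add, coeff_neg]
        rw [egg_coeff_mul_CX2 _ _ _ (by omega), egg_coeff_mul_CX _ _ _ (by omega),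
          H10 n (by omega), H10 (n - 2) (by omega), H11 (n - 1) (by omega) (by omega)]
        ring
      · intro n hn1 hn
        rw [e11]
        simp only [coeff_add, coeff_neg]
        rw [egg_coeff_mul_CX _ _ _ (by omega), H10 (n - 1) (by omega), H11 n (by omega) (by omega)]
        ring


lemma egg_prod_even_odd (f : ℕ → ℝ) (p : ℕ) :
    (∏ t ∈ Finset.range p, f (2 * t + 2)) * ∏ t ∈ Finset.range p, f (2 * t + 1)
      = ∏ k ∈ Finset.Icc 1 (2 * p), f k := by
  induction p with
  | zero => simp
  | succ p ih =>
      rw [Finset.prod_range_succ, Finset.prod_range_succ,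
        show 2 * (p + 1) = 2 * p + 1 + 1 by omega,
        Finset.prod_Icc_succ_top (by omega), Finset.prod_Icc_succ_top (by omega), ← ih,
        show 2 * p + 1 + 1 = 2 * p + 2 by omega]
      ring

/-- For `Ā_λ = A_{λ,p} ⋯ A_{λ,1}` and `ε̄ = ∏_{k=1}^{2p} ε_k`, one has
`det (Ā_λ - I) = 2 - trace Ā_λ = -ε̄ λ^{2p} + O(λ^{2p-1})`; in particular, for all
sufficiently large `λ`, `det (Ā_λ - I) ≠ 0`, so `(Ā_λ - I) x = v` has a unique
solution `x` for every `v ∈ ℝ²`. -/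
theorem eggbeater_det_asymptotics_and_unique_solution
    (p : ℕ) (hp : 0 < p) (ε : ℕ → ℝ) (hε : ∀ k, ε k = 1 ∨ ε k = -1)
    (hper : ∀ k, ε (k + 2 * p) = ε k) :
    (∀ lam : ℝ, (eggProdFull ε p lam - 1).det = 2 - (eggProdFull ε p lam).trace) ∧
    ((fun lam : ℝ => (eggProdFull ε p lam - 1).det +
        (∏ k ∈ Finset.Icc 1 (2 * p), ε k) * lam ^ (2 * p)) =O[atTop]
      fun lam : ℝ => lam ^ (2 * p - 1)) ∧
    (∃ Λ : ℝ, ∀ lam : ℝ, Λ ≤ lam →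
      (eggProdFull ε p lam - 1).det ≠ 0 ∧
      ∀ v : Fin 2 → ℝ, ∃! x : Fin 2 → ℝ, (eggProdFull ε p lam - 1).mulVec x = v) := by
  classical
  have h2p0 : 2 * p ≠ 0 := by omega
  set εbar := ∏ k ∈ Finset.Icc 1 (2 * p), ε k with hεbar
  obtain ⟨H00a, H00b, H01, H10, H11⟩ := eggQM_invariant ε p p
  set Q := eggQM ε p p with hQdef
  set T : ℝ[X] := Q 0 0 + Q 1 1 with hT
  -- the product of signs
  have hεne : εbar ≠ 0 := by
    rw [hεbar]
    refine Finset.prod_ne_zero_iff.mpr fun k _ => ?_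
    rcases hε k with h | h <;> rw [h] <;> norm_num
  have hcp : (∏ t ∈ Finset.range p, (ε (2 * (p - t) + 2) * ε (2 * (p - t) - 1))) = εbar := by
    rw [Finset.prod_mul_distrib]
    have h1 : (∏ t ∈ Finset.range p, ε (2 * (p - t) + 2))
        = ∏ t ∈ Finset.range p, ε (2 * t + 4) := by
      rw [← Finset.prod_range_reflect (fun j => ε (2 * j + 4)) p]
      refine Finset.prod_congr rfl fun t ht => ?_
      simp only [Finset.mem_range] at ht
      congr 1
      omega
    have h2 : (∏ t ∈ Finset.range p, ε (2 * (p - t) - 1))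
        = ∏ t ∈ Finset.range p, ε (2 * t + 1) := by
      rw [← Finset.prod_range_reflect (fun j => ε (2 * j + 1)) p]
      refine Finset.prod_congr rfl fun t ht => ?_
      simp only [Finset.mem_range] at ht
      congr 1
      omega
    have h3 : (∏ t ∈ Finset.range p, ε (2 * t + 4))
        = ∏ t ∈ Finset.range p, ε (2 * t + 2) := by
      obtain ⟨q, rfl⟩ : ∃ q, p = q + 1 := ⟨p - 1, by omega⟩
      rw [Finset.prod_range_succ, Finset.prod_range_succ' (fun t => ε (2 * t + 2)) q]
      congr 1
      rw [show 2 * q + 4 = 2 + 2 * (q + 1) by omega, hper 2]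
  
    rw [h1, h2, h3, egg_prod_even_odd, hεbar]
  have hTcoeff_top : T.coeff (2 * p) = εbar := by
    rw [hT, coeff_add, H00b, hcp, H11 (2 * p) (by omega) (by omega), add_zero]
  have hTcoeff_hi : ∀ m, 2 * p < m → T.coeff m = 0 := by
    intro m hm
    rw [hT, coeff_add, H00a m hm, H11 m (by omega) (by omega), add_zero]
  have htr : ∀ lam, (eggProdFull ε p lam).trace = eval lam T := by
    intro lam
    rw [← eggQM_map ε p lam]
    simp [Matrix.trace_fin_two, Matrix.map_apply, hT, ← hQdef]
  have hdetl : ∀ l : List (Matrix (Fin 2) (Fin 2) ℝ), (∀ A ∈ l, A.det = 1) → l.prod.det = 1 := by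
    intro l
    induction l with
    | nil => simp
    | cons A l ih =>
        intro h
        rw [List.prod_cons, Matrix.det_mul, h A (by simp),
          ih (fun B hB => h B (by simp [hB])), one_mul]
  have hdet1 : ∀ lam, (eggProdFull ε p lam).det = 1 := by
    intro lam
    refine hdetl _ fun A hA => ?_
    simp only [List.mem_map, List.mem_range] at hA
    obtain ⟨t, _, rfl⟩ := hA
    simp only [eggMat, Matrix.det_fin_two_of]
    ring
  have part1 : ∀ lam, (eggProdFull ε p lam - 1).det = 2 - (eggProdFull ε p lam).trace := by
    intro lam
    have h1 := hdet1 lam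
    rw [Matrix.det_fin_two] at h1
    rw [Matrix.det_fin_two, Matrix.trace_fin_two]
    simp only [Matrix.sub_apply, Matrix.one_apply_eq, Matrix.one_apply_ne (by decide : (0 : Fin 2) ≠ 1),
      Matrix.one_apply_ne (by decide : (1 : Fin 2) ≠ 0)]
    linear_combination h1
  set R : ℝ[X] := (C 2 - T) + C εbar * X ^ (2 * p) with hR
  have hevalR : ∀ lam, (eggProdFull ε p lam - 1).det + εbar * lam ^ (2 * p) = eval lam R := by
    intro lam
    rw [part1 lam, htr lam, hR]
    simp only [eval_add, eval_sub, eval_mul, eval_pow, eval_C, eval_X]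
  have hRdeg : R.degree ≤ ((2 * p - 1 : ℕ) : WithBot ℕ) := by
    rw [Polynomial.degree_le_iff_coeff_zero]
    intro m hm
    rw [Nat.cast_lt] at hm
    have hm0 : m ≠ 0 := by omega
    rw [hR]
    simp only [coeff_add, coeff_sub, coeff_C_mul, coeff_X_pow, coeff_C, if_neg hm0]
    rcases eq_or_ne m (2 * p) with rfl | hne
    · rw [hTcoeff_top, if_pos rfl]
      ring
    · rw [hTcoeff_hi m (by omega), if_neg hne]
      ring
  have part2 : (fun lam : ℝ => (eggProdFull ε p lam - 1).det + εbar * lam ^ (2 * p)) =O[atTop]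
      fun lam : ℝ => lam ^ (2 * p - 1) := by
    have hdeg' : R.degree ≤ (X ^ (2 * p - 1) : ℝ[X]).degree := by
      rw [Polynomial.degree_X_pow]
      exact hRdeg
    have h := Polynomial.isBigO_of_degree_le R (X ^ (2 * p - 1)) hdeg'
    simp only [eval_pow, eval_X] at h
    have heq : (fun lam : ℝ => (eggProdFull ε p lam - 1).det + εbar * lam ^ (2 * p))
        = fun lam => eval lam R := funext hevalR
    rw [heq]
    exact h
  refine ⟨part1, part2, ?_⟩
  have hDne : (C 2 - T : ℝ[X]) ≠ 0 := by
    intro h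
    have h2 : (C 2 - T : ℝ[X]).coeff (2 * p) = 0 := by rw [h]; simp
    rw [coeff_sub, coeff_C, if_neg h2p0, hTcoeff_top] at h2
    exact hεne (by linarith)
  obtain ⟨Λ, hΛ⟩ := Filter.eventually_atTop.mp (Polynomial.eventually_no_roots _ hDne)
  refine ⟨Λ, fun lam hlam => ?_⟩
  have hdetne : (eggProdFull ε p lam - 1).det ≠ 0 := by
    rw [part1 lam, htr lam]
    intro hc
    exact hΛ lam hlam (by rw [Polynomial.IsRoot, eval_sub, eval_C]; exact hc)
  refine ⟨hdetne, fun v => ?_⟩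
  set M := eggProdFull ε p lam - 1 with hM
  have hu : IsUnit M.det := isUnit_iff_ne_zero.mpr hdetne
  refine ⟨M⁻¹.mulVec v, ?_, ?_⟩
  · show M.mulVec (M⁻¹.mulVec v) = v
    rw [Matrix.mulVec_mulVec, Matrix.mul_nonsing_inv _ hu, Matrix.one_mulVec]
  · intro y hy
    rw [← hy, Matrix.mulVec_mulVec, Matrix.nonsing_inv_mul _ hu, Matrix.one_mulVec]
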